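/- Cutoff property (4): For every ε, b > 0 and each j = 1, 2, …, p there is a constant c = c(j,ε,b) > 0 such that for all x ∈ [ε, b+ε], |χ^{(j)}(x;ε,b)| ≤ c · χ'(x;ε/3,b+ε). -/

import Mathlib

open MeasureTheory Real Filter Polynomial
open scoped ENNReal NNReal

noncomputable section

/-- The profile `ρ(x) = a ∫₀ˣ yᵖ(1-y)ᵖ dy`, normalized so that `ρ(1) = 1`. -/
def rho (p : ℕ) (x : ℝ) : ℝ :=
  (∫ y in (0:ℝ)..1, y^p * (1-y)^p)⁻¹ * ∫ y in (0:ℝ)..x, y^p * (1-y)^p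

/-- The cutoff `χ(x; ε, b)`. -/
def chi (p : ℕ) (ε b x : ℝ) : ℝ :=
  if x ≤ ε then 0 else if x < b + ε then rho p ((x - ε)/b) else 1

/-- The weighted cutoff `χₙ(x; ε, b) = xⁿ χ(x; ε, b)`. -/
def chiN (p n : ℕ) (ε b x : ℝ) : ℝ := x^n * chi p ε b x

/-- `η(x; ε, b) = sqrt(χ'(x; ε, b))`. -/
def eta (p : ℕ) (ε b x : ℝ) : ℝ := Real.sqrt (deriv (fun y => chi p ε b y) x)

/-- `ηₙ(x; ε, b) = sqrt(χₙ'(x; ε, b))`. -/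
def etaN (p n : ℕ) (ε b x : ℝ) : ℝ := Real.sqrt (deriv (fun y => chiN p n ε b y) x)

-- auxiliary
def AA (p : ℕ) : ℝ := (∫ y in (0:ℝ)..1, y^p * (1-y)^p)⁻¹

def QQ (p : ℕ) : Polynomial ℝ := X^p * (1 - X)^p

lemma QQ_eval (p : ℕ) (x : ℝ) : (QQ p).eval x = x^p * (1-x)^p := by
  simp [QQ]

lemma cont_f (p : ℕ) : Continuous (fun y : ℝ => y^p * (1-y)^p) := by
  continuity

lemma integral_f_pos (p : ℕ) : 0 < ∫ y in (0:ℝ)..1, y^p * (1-y)^p := by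
  apply intervalIntegral.intervalIntegral_pos_of_pos_on
  · exact (cont_f p).intervalIntegrable 0 1
  · intro x hx
    have h1 : 0 < x := hx.1
    have h2 : 0 < 1 - x := by linarith [hx.2]
    positivity
  · norm_num

lemma AA_pos (p : ℕ) : 0 < AA p := inv_pos.mpr (integral_f_pos p)

lemma hasDerivAt_rho (p : ℕ) (x : ℝ) :
    HasDerivAt (rho p) (AA p * (QQ p).eval x) x := by
  have h : HasDerivAt (fun u => ∫ y in (0:ℝ)..u, y^p * (1-y)^p) (x^p * (1-x)^p) x := by
    apply intervalIntegral.integral_hasDerivAt_right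
      ((cont_f p).intervalIntegrable 0 x)
      ((cont_f p).stronglyMeasurable.stronglyMeasurableAtFilter)
      (cont_f p).continuousAt
  rw [QQ_eval]
  exact h.const_mul (AA p)

lemma rho_zero (p : ℕ) : rho p 0 = 0 := by simp [rho]

lemma rho_one (p : ℕ) : rho p 1 = 1 := by
  rw [rho]
  exact inv_mul_cancel₀ (integral_f_pos p).ne'

lemma QQ_ne_zero (p : ℕ) : QQ p ≠ 0 := by
  intro h
  have := congrArg (fun q => Polynomial.eval (1/2 : ℝ) q) h
  simp [QQ_eval] at this
  norm_num at this

lemma eval_iter_zero {p j : ℕ} (hj : j < p) : (derivative^[j] (QQ p)).eval 0 = 0 := by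
  apply Polynomial.isRoot_iterate_derivative_of_lt_rootMultiplicity
  calc j < p := hj
    _ ≤ (QQ p).rootMultiplicity 0 := by
        rw [Polynomial.le_rootMultiplicity_iff (QQ_ne_zero p)]
        simp only [map_zero, sub_zero]
        exact Dvd.intro _ rfl

lemma eval_iter_one {p j : ℕ} (hj : j < p) : (derivative^[j] (QQ p)).eval 1 = 0 := by
  apply Polynomial.isRoot_iterate_derivative_of_lt_rootMultiplicity
  calc j < p := hj
    _ ≤ (QQ p).rootMultiplicity 1 := by
        rw [Polynomial.le_rootMultiplicity_iff (QQ_ne_zero p)]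
        have h1 : (X - C 1 : Polynomial ℝ) ∣ (1 - X) := ⟨-1, by rw [Polynomial.C_1]; ring⟩
        exact (pow_dvd_pow_of_dvd h1 p).trans (dvd_mul_left _ _)

/-- derivative chain function in the middle -/
def DD (p : ℕ) (ε b : ℝ) (j : ℕ) (x : ℝ) : ℝ :=
  AA p * ((derivative^[j] (QQ p)).eval ((x - ε)/b)) * (b⁻¹)^(j+1)

lemma hasDerivAt_DD (p : ℕ) (ε : ℝ) {b : ℝ} (hb : b ≠ 0) (j : ℕ) (x : ℝ) :
    HasDerivAt (DD p ε b j) (DD p ε b (j+1) x) x := by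
  have hin : HasDerivAt (fun y : ℝ => (y - ε)/b) b⁻¹ x := by
    simpa using ((hasDerivAt_id x).sub_const ε).div_const b
  have h := ((derivative^[j] (QQ p)).hasDerivAt ((x - ε)/b)).comp x hin
  have h2 := (h.const_mul (AA p)).mul_const ((b⁻¹)^(j+1))
  have : AA p * (Polynomial.eval ((x - ε) / b) (derivative (derivative^[j] (QQ p))) * b⁻¹) *
      b⁻¹ ^ (j + 1) = DD p ε b (j+1) x := by
    rw [DD, Function.iterate_succ_apply']
    ring
  rw [this] at h2
  exact h2

lemma DD_cont (p : ℕ) (ε b : ℝ) (j : ℕ) : Continuous (DD p ε b j) := by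
  unfold DD
  fun_prop

/-- The gluing lemma -/
lemma glue {u v : ℝ} (huv : u < v) {F F' : ℝ → ℝ} {L R : ℝ}
    (hF : ∀ x, HasDerivAt F (F' x) x)
    (hFu : F u = L) (hFv : F v = R) (hF'u : F' u = 0) (hF'v : F' v = 0) (x : ℝ) :
    HasDerivAt (fun y => if y ≤ u then L else if y < v then F y else R)
      (if x ≤ u then 0 else if x < v then F' x else 0) x := by
  set G : ℝ → ℝ := fun y => if y ≤ u then L else if y < v then F y else R with hG
  rcases lt_trichotomy x u with hx | rfl | hx
  · rw [if_pos hx.le]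
    have : G =ᶠ[nhds x] (fun _ => L) := by
      filter_upwards [isOpen_Iio.mem_nhds (show x ∈ Set.Iio u from hx)] with y hy
      simp only [hG, if_pos (Set.mem_Iio.mp hy).le]
    exact (hasDerivAt_const x L).congr_of_eventuallyEq this
  · rw [if_pos le_rfl]
    have hleft : HasDerivWithinAt G 0 (Set.Iic x) x := by
      apply (hasDerivWithinAt_const x (Set.Iic x) L).congr
      · intro y hy; simp only [hG, if_pos (Set.mem_Iic.mp hy)]
      · simp [hG]
    have hright : HasDerivWithinAt G 0 (Set.Ici x) x := by
      have h1 : HasDerivWithinAt F 0 (Set.Ici x) x := by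
        have := (hF x).hasDerivWithinAt (s := Set.Ici x); rwa [hF'u] at this
      apply h1.congr_of_eventuallyEq
      · filter_upwards [Ico_mem_nhdsGE huv] with y hy
        rcases eq_or_lt_of_le hy.1 with h | h
        · simp [hG, ← h, hFu]
        · simp [hG, not_le.mpr h, hy.2]
      · simp [hG, hFu]
    have := hleft.union hright
    rwa [Set.Iic_union_Ici, hasDerivWithinAt_univ] at this
  · rw [if_neg (not_le.mpr hx)]
    rcases lt_trichotomy x v with hxv | rfl | hxv
    · rw [if_pos hxv]
      have : G =ᶠ[nhds x] F := by
        filter_upwards [isOpen_Ioo.mem_nhds (show x ∈ Set.Ioo u v from ⟨hx, hxv⟩)] with y hy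
        simp [hG, not_le.mpr hy.1, hy.2]
      exact (hF x).congr_of_eventuallyEq this
    · rw [if_neg (lt_irrefl x)]
      have hleft : HasDerivWithinAt G 0 (Set.Iic x) x := by
        have h1 : HasDerivWithinAt F 0 (Set.Iic x) x := by
          have := (hF x).hasDerivWithinAt (s := Set.Iic x); rwa [hF'v] at this
        apply h1.congr_of_eventuallyEq
        · filter_upwards [Ioc_mem_nhdsLE hx] with y hy
          rcases eq_or_lt_of_le hy.2 with h | h
          · subst h; simp [hG, not_le.mpr hx, hFv]
          · simp [hG, not_le.mpr (hy.1), h]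
        · simp [hG, not_le.mpr hx, hFv]
      have hright : HasDerivWithinAt G 0 (Set.Ici x) x := by
        apply (hasDerivWithinAt_const x (Set.Ici x) R).congr
        · intro y hy
          have h1 : ¬ y ≤ u := not_le.mpr (lt_of_lt_of_le hx hy)
          have h2 : ¬ y < x := not_lt.mpr hy
          simp [hG, h1, h2]
        · simp [hG, not_le.mpr hx]
      have := hleft.union hright
      rwa [Set.Iic_union_Ici, hasDerivWithinAt_univ] at this
    · rw [if_neg (not_lt.mpr hxv.le)]
      have : G =ᶠ[nhds x] (fun _ => R) := by
        filter_upwards [isOpen_Ioi.mem_nhds (show x ∈ Set.Ioi v from hxv)] with y hy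
        have h1 : ¬ y ≤ u := not_le.mpr (huv.trans hy)
        have h2 : ¬ y < v := not_lt.mpr hy.le
        simp [hG, h1, h2]
      exact (hasDerivAt_const x R).congr_of_eventuallyEq this

/-- The j-th derivative candidates of chi -/
def gg (p : ℕ) (ε b : ℝ) : ℕ → ℝ → ℝ
  | 0 => chi p ε b
  | (j+1) => fun x => if x ≤ ε then 0 else if x < b + ε then DD p ε b j x else 0

lemma hasDerivAt_gg {p : ℕ} (hp : 0 < p) {ε b : ℝ} (hε : 0 < ε) (hb : 0 < b)
    {j : ℕ} (hj : j < p) (x : ℝ) :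
    HasDerivAt (gg p ε b j) (gg p ε b (j+1) x) x := by
  have huv : ε < b + ε := by linarith
  have hb' : b ≠ 0 := hb.ne'
  have hmid0 : ((ε : ℝ) - ε) / b = 0 := by rw [sub_self, zero_div]
  have hmid1 : ((b + ε) - ε) / b = 1 := by field_simp; ring
  cases j with
  | zero =>
    have hF : ∀ y, HasDerivAt (fun z => rho p ((z - ε)/b)) (DD p ε b 0 y) y := by
      intro y
      have hin : HasDerivAt (fun z : ℝ => (z - ε)/b) b⁻¹ y := by
        simpa using ((hasDerivAt_id y).sub_const ε).div_const b
      have := (hasDerivAt_rho p ((y - ε)/b)).comp y hin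
      simpa [DD, mul_assoc, Function.comp_def] using this
    refine glue (F := fun z => rho p ((z - ε)/b)) (F' := DD p ε b 0) (L := 0) (R := 1)
      huv hF ?_ ?_ ?_ ?_ x
    · simp only [hmid0]; exact rho_zero p
    · simp only [hmid1]; exact rho_one p
    · simp only [DD, hmid0]; rw [eval_iter_zero hp]; ring
    · simp only [DD, hmid1]; rw [eval_iter_one hp]; ring
  | succ k =>
    have hF : ∀ y, HasDerivAt (DD p ε b k) (DD p ε b (k+1) y) y :=
      hasDerivAt_DD p ε hb' k
    refine glue (F := DD p ε b k) (F' := DD p ε b (k+1)) (L := 0) (R := 0)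
      huv hF ?_ ?_ ?_ ?_ x
    · simp only [DD, hmid0]; rw [eval_iter_zero (lt_trans (Nat.lt_succ_self k) hj)]; ring
    · simp only [DD, hmid1]; rw [eval_iter_one (lt_trans (Nat.lt_succ_self k) hj)]; ring
    · simp only [DD, hmid0]; rw [eval_iter_zero hj]; ring
    · simp only [DD, hmid1]; rw [eval_iter_one hj]; ring

lemma iteratedDeriv_chi {p : ℕ} (hp : 0 < p) {ε b : ℝ} (hε : 0 < ε) (hb : 0 < b) :
    ∀ j, j ≤ p → iteratedDeriv j (fun y => chi p ε b y) = gg p ε b j := by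
  intro j
  induction j with
  | zero => intro _; rw [iteratedDeriv_zero]; rfl
  | succ k ih =>
    intro hk
    rw [iteratedDeriv_succ, ih (le_of_lt hk)]
    funext x
    exact (hasDerivAt_gg hp hε hb (Nat.lt_of_succ_le hk) x).deriv

/-- **Cutoff property (4):** on `[ε, b+ε]`, `|χ^{(j)}(·;ε,b)| ≤ c·χ'(·;ε/3,b+ε)` for
`j = 1, …, p`. -/
theorem cutoff_property_four :
    ∃ p₀ : ℕ, ∀ p ≥ p₀, ∀ ε > (0:ℝ), ∀ b > (0:ℝ), ∀ j : ℕ, 1 ≤ j → j ≤ p →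
      ∃ c > (0:ℝ), ∀ x ∈ Set.Icc ε (b + ε),
        |iteratedDeriv j (fun y => chi p ε b y) x|
          ≤ c * deriv (fun y => chi p (ε/3) (b + ε) y) x := by
  refine ⟨1, fun p hp ε hε b hb j hj1 hjp => ?_⟩
  have hp0 : 0 < p := hp
  obtain ⟨k, rfl⟩ : ∃ k, j = k + 1 := ⟨j - 1, (Nat.succ_pred_eq_of_pos hj1).symm⟩
  -- RHS function
  set r : ℝ → ℝ := DD p (ε/3) (b+ε) 0 with hr
  have hε3 : (0:ℝ) < ε/3 := by linarith
  have hbε : (0:ℝ) < b + ε := by linarith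
  -- RHS derivative identification on [ε, b+ε]
  have hderiv_r : ∀ x ∈ Set.Icc ε (b+ε), deriv (fun y => chi p (ε/3) (b+ε) y) x = r x := by
    intro x hx
    have h := (hasDerivAt_gg hp0 hε3 hbε hp0 x).deriv
    have h0 : gg p (ε/3) (b+ε) 0 = chi p (ε/3) (b+ε) := rfl
    rw [h0] at h
    rw [h]
    have h1 : ¬ x ≤ ε/3 := by push_neg; linarith [hx.1]
    have h2 : x < (b+ε) + ε/3 := by linarith [hx.2]
    simp [gg, h1, h2, hr]
  -- r is positive on [ε, b+ε]
  have hr_pos : ∀ x ∈ Set.Icc ε (b+ε), 0 < r x := by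
    intro x hx
    have ht1 : 0 < (x - ε/3)/(b+ε) := by
      apply div_pos; linarith [hx.1]; exact hbε
    have ht2 : (x - ε/3)/(b+ε) < 1 := by
      rw [div_lt_one hbε]; linarith [hx.2]
    have : (0:ℝ) < ((x - ε/3)/(b+ε))^p * (1 - (x - ε/3)/(b+ε))^p := by
      have := ht1; have h2 : (0:ℝ) < 1 - (x - ε/3)/(b+ε) := by linarith
      positivity
    simp only [hr, DD, Function.iterate_zero, id, QQ_eval]
    have hA := AA_pos p
    have hbi : (0:ℝ) < ((b+ε)⁻¹)^(0+1) := by positivity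
    positivity
  -- LHS identification
  have hiter := iteratedDeriv_chi hp0 hε hb (k+1) hjp
  -- bound |gg (k+1) x| ≤ |DD p ε b k x|
  have hbound : ∀ x, |gg p ε b (k+1) x| ≤ |DD p ε b k x| := by
    intro x
    simp only [gg]
    split_ifs <;> simp [abs_nonneg]
  -- compactness
  have hcomp : IsCompact (Set.Icc ε (b+ε)) := isCompact_Icc
  have hne : (Set.Icc ε (b+ε)).Nonempty := ⟨ε, le_refl ε, by linarith⟩
  obtain ⟨x₀, hx₀, hx₀max⟩ := hcomp.exists_isMaxOn hne
    ((DD_cont p ε b k).abs.continuousOn)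
  obtain ⟨x₁, hx₁, hx₁min⟩ := hcomp.exists_isMinOn hne (DD_cont p (ε/3) (b+ε) 0).continuousOn
  have hrx₁ : 0 < r x₁ := hr_pos x₁ hx₁
  refine ⟨(|DD p ε b k x₀| + 1)/(r x₁), by positivity, fun x hx => ?_⟩
  rw [hiter, hderiv_r x hx]
  calc |gg p ε b (k+1) x| ≤ |DD p ε b k x| := hbound x
    _ ≤ |DD p ε b k x₀| := hx₀max hx
    _ ≤ (|DD p ε b k x₀| + 1)/(r x₁) * r x₁ := by
        rw [div_mul_cancel₀ _ hrx₁.ne']; linarith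
    _ ≤ (|DD p ε b k x₀| + 1)/(r x₁) * r x := by
        apply mul_le_mul_of_nonneg_left (hx₁min hx)
        positivity

end
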